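/- For every n ≥ 2, the trivial normal subgroup {1} of F_n = FreeGroup (Fin n) (the kernel of the identity marking of the free group F_n) belongs to L_n and satisfies {1} ∈ D^{n-2}(L_n), i.e., its Cantor–Bendixson rank in L_n is at least n − 2. (Equivalently, Rk(F_n) ≥ n − 1, where Rk = CB + 1.) -/

import Mathlib

/-- The characteristic function of a subset, identifying `2^G` with `G → Bool`. -/
noncomputable def chi {G : Type*} (s : Set G) : G → Bool :=
  fun g => @decide (g ∈ s) (Classical.propDecidable _)

/-- `cbD A` is the set of points of `A` that are accumulation points of `A`,
i.e. the non-isolated points of the subspace `A`.  Its iterates `cbD^[k] A`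
are the finite Cantor–Bendixson derivatives `D^k(A)`. -/
def cbD {X : Type*} [TopologicalSpace X] (A : Set X) : Set X :=
  A ∩ derivedSet A

/-- A group `L` is fully residually free if for every finite subset `S ⊆ L` there
is a homomorphism `φ` to a free group of rank 2 with `φ s ≠ 1` for all `s ∈ S`, `s ≠ 1`. -/
def FullyResiduallyFree (L : Type*) [Group L] : Prop :=
  ∀ S : Finset L, ∃ φ : L →* FreeGroup (Fin 2), ∀ s ∈ S, s ≠ 1 → φ s ≠ 1

/-- `LnSet n` is the set of (characteristic functions of) normal subgroups `N` of
`F_n` such that `F_n / N` is fully residually free, inside `2^{F_n}` with the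
product topology. -/
def LnSet (n : ℕ) : Set (FreeGroup (Fin n) → Bool) :=
  {f | ∃ N : Subgroup (FreeGroup (Fin n)), ∃ hN : N.Normal,
    @FullyResiduallyFree (FreeGroup (Fin n) ⧸ N) (@QuotientGroup.Quotient.group _ _ N hN) ∧
      f = chi (N : Set (FreeGroup (Fin n)))}


set_option maxHeartbeats 1000000

open Matrix

-- assume l1 defs present; re-import by concatenation later. For now copy minimal:

open Matrix

abbrev M2 (R : Type) [CommRing R] := Matrix (Fin 2) (Fin 2) R

variable {R S : Type} [CommRing R] [CommRing S]

def mP (r : R) : M2 R := !![1+2*r, -4*r; r, 1-2*r]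
def mQ (r : R) : M2 R := !![1+4*r, -16*r; r, 1-4*r]
def mM (c : ℤ) : M2 R := !![1+12*c, -24*c^2; 6, 1-12*c]

lemma mP_mul (r s : R) : mP r * mP s = mP (r+s) := by
  ext i j; fin_cases i <;> fin_cases j <;> simp [mP, Matrix.mul_apply, Fin.sum_univ_two] <;> ring

lemma mQ_mul (r s : R) : mQ r * mQ s = mQ (r+s) := by
  ext i j; fin_cases i <;> fin_cases j <;> simp [mQ, Matrix.mul_apply, Fin.sum_univ_two] <;> ring

lemma mP_zero : mP (0 : R) = 1 := by
  ext i j; fin_cases i <;> fin_cases j <;> simp [mP, Matrix.one_apply]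

lemma mQ_zero : mQ (0 : R) = 1 := by
  ext i j; fin_cases i <;> fin_cases j <;> simp [mQ, Matrix.one_apply]

def uP (r : R) : (M2 R)ˣ :=
  ⟨mP r, mP (-r), by rw [mP_mul]; simpa using mP_zero, by rw [mP_mul]; simpa using mP_zero⟩

def uQ (r : R) : (M2 R)ˣ :=
  ⟨mQ r, mQ (-r), by rw [mQ_mul]; simpa using mQ_zero, by rw [mQ_mul]; simpa using mQ_zero⟩

def uM (c : ℤ) : (M2 R)ˣ :=
  ⟨mM c, !![1-12*c, 24*c^2; -6, 1+12*c], by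
    ext i j; fin_cases i <;> fin_cases j <;>
      simp [mM, Matrix.mul_apply, Fin.sum_univ_two, Matrix.one_apply] <;> ring, by
    ext i j; fin_cases i <;> fin_cases j <;>
      simp [mM, Matrix.mul_apply, Fin.sum_univ_two, Matrix.one_apply] <;> ring⟩

lemma uP_inv (r : R) : (uP r)⁻¹ = uP (-r) := by
  rw [eq_comm, eq_inv_iff_mul_eq_one]; ext : 1
  show mP (-r) * mP r = 1; rw [mP_mul]; simpa using mP_zero

lemma uQ_inv (r : R) : (uQ r)⁻¹ = uQ (-r) := by
  rw [eq_comm, eq_inv_iff_mul_eq_one]; ext : 1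
  show mQ (-r) * mQ r = 1; rw [mQ_mul]; simpa using mQ_zero

lemma uP_pow (r : R) (k : ℕ) : (uP r)^k = uP (k * r) := by
  induction k with
  | zero => ext : 1; show (1 : M2 R) = mP _; simp [mP_zero.symm]
  | succ k ih => rw [pow_succ, ih]; ext : 1; show mP _ * mP r = mP _; rw [mP_mul]; push_cast; ring_nf

lemma uQ_pow (r : R) (k : ℕ) : (uQ r)^k = uQ (k * r) := by
  induction k with
  | zero => ext : 1; show (1 : M2 R) = mQ _; simp [mQ_zero.symm]
  | succ k ih => rw [pow_succ, ih]; ext : 1; show mQ _ * mQ r = mQ _; rw [mQ_mul]; push_cast; ring_nf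

lemma uP_zpow (r : R) (k : ℤ) : (uP r)^k = uP (k * r) := by
  cases k with
  | ofNat k => rw [Int.ofNat_eq_coe, zpow_natCast, uP_pow]; norm_num
  | negSucc k => rw [zpow_negSucc, uP_pow, uP_inv]; congr 1; push_cast; ring

lemma uQ_zpow (r : R) (k : ℤ) : (uQ r)^k = uQ (k * r) := by
  cases k with
  | ofNat k => rw [Int.ofNat_eq_coe, zpow_natCast, uQ_pow]; norm_num
  | negSucc k => rw [zpow_negSucc, uQ_pow, uQ_inv]; congr 1; push_cast; ring

lemma uM_one : (uM 1 : (M2 R)ˣ) = uP 6 := by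
  ext : 1; show mM 1 = mP 6
  ext i j; fin_cases i <;> fin_cases j <;> norm_num [mM, mP]

lemma uM_two : (uM 2 : (M2 R)ˣ) = uQ 6 := by
  ext : 1; show mM 2 = mQ 6
  ext i j; fin_cases i <;> fin_cases j <;> norm_num [mM, mQ]

lemma solve_t (t : ℚ) (ht : t ≠ 0) :
    mP (1/t - 1/2) * mQ (3/2*t^2) * mP (1/2 - 1/t) = !![13+6*t, -6*(t+2)^2; 6, -11-6*t] := by
  ext i j
  fin_cases i <;> fin_cases j <;>
    · show _ = _
      simp only [mP, mQ, Matrix.mul_apply, Fin.sum_univ_two, Matrix.cons_val', Matrix.cons_val_zero,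
        Matrix.cons_val_one, Matrix.head_cons, Matrix.empty_val', Matrix.cons_val_fin_one,
        Matrix.head_fin_const, Matrix.of_apply, Fin.zero_eta, Fin.mk_one, Fin.isValue]
      field_simp
      ring

/-- The key solvability: `P(a) Q(b) P(d) = M(c)` over `ℚ`. -/
lemma solve (c : ℤ) (hc : (2:ℚ)*c - 2 ≠ 0) :
    uP (1/((2:ℚ)*c-2) - 1/2) * uQ (3/2*((2:ℚ)*c-2)^2) * uP (1/2 - 1/((2:ℚ)*c-2)) = uM c := by
  ext : 1
  show mP _ * mQ _ * mP _ = mM c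
  rw [solve_t _ hc]
  ext i j
  fin_cases i <;> fin_cases j <;> simp [mM] <;> push_cast <;> ring

/-- Functoriality of the matrix units under ring homs. -/
def matGL (f : R →+* S) : (M2 R)ˣ →* (M2 S)ˣ :=
  Units.map ((RingHom.mapMatrix f : M2 R →+* M2 S) : M2 R →* M2 S)

lemma matGL_uP (f : R →+* S) (r : R) : matGL f (uP r) = uP (f r) := by
  ext : 1
  simp only [matGL, Units.coe_map]
  show f.mapMatrix (mP r) = mP (f r)
  ext i j; fin_cases i <;> fin_cases j <;>
    simp [mP, RingHom.mapMatrix_apply, Matrix.map_apply, map_ofNat]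

lemma matGL_uQ (f : R →+* S) (r : R) : matGL f (uQ r) = uQ (f r) := by
  ext : 1
  simp only [matGL, Units.coe_map]
  show f.mapMatrix (mQ r) = mQ (f r)
  ext i j; fin_cases i <;> fin_cases j <;>
    simp [mQ, RingHom.mapMatrix_apply, Matrix.map_apply, map_ofNat]

lemma matGL_uM (f : R →+* S) (c : ℤ) : matGL f (uM c) = uM c := by
  ext : 1
  simp only [matGL, Units.coe_map]
  show f.mapMatrix (mM c) = mM c
  ext i j; fin_cases i <;> fin_cases j <;>
    simp [mM, RingHom.mapMatrix_apply, Matrix.map_apply, map_intCast, map_ofNat]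

/-! ### Ping-pong: the family `uM (i+1)`, `i : ℕ`, is free. -/

def V2 : Type := {v : Fin 2 → ℚ // v ≠ 0}

instance : MulAction (M2 ℚ)ˣ V2 where
  smul g v := ⟨g.val.mulVec v.1, by
    intro h
    apply v.2
    have : (g⁻¹.val * g.val).mulVec v.1 = 0 := by
      rw [← Matrix.mulVec_mulVec, h, Matrix.mulVec_zero]
    rw [Units.inv_mul, Matrix.one_mulVec] at this
    exact this⟩
  one_smul v := Subtype.ext (by simp [HSMul.hSMul, SMul.smul])
  mul_smul g h v := Subtype.ext (by
    show (g.val * h.val).mulVec v.1 = g.val.mulVec (h.val.mulVec v.1)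
    rw [Matrix.mulVec_mulVec])

lemma V2_smul_val (g : (M2 ℚ)ˣ) (v : V2) : (g • v).1 = g.val.mulVec v.1 := rfl

/-- slope-numerator coordinate for the `i`-th fixed direction -/
def uu (i : ℕ) (v : V2) : ℚ := v.1 0 - 2*(i+1) * v.1 1

def XX (i : ℕ) : Set V2 := {v | 0 ≤ uu i v * v.1 1 ∧ 2 * |uu i v| < |v.1 1|}
def YY (i : ℕ) : Set V2 := {v | uu i v * v.1 1 < 0 ∧ 2 * |uu i v| < |v.1 1|}

lemma uM_smul (i : ℕ) (v : V2) :
    uu i ((uM (i+1) : (M2 ℚ)ˣ) • v) = uu i v ∧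
    ((uM (i+1) : (M2 ℚ)ˣ) • v).1 1 = 6 * uu i v + v.1 1 := by
  have h0 : ((uM (i+1) : (M2 ℚ)ˣ) • v).1 0
      = (1+12*(i+1:ℚ)) * v.1 0 - 24*(i+1:ℚ)^2 * v.1 1 := by
    rw [V2_smul_val]
    show (mM (i+1)).mulVec v.1 0 = _
    simp [mM, Matrix.mulVec, dotProduct, Fin.sum_univ_two, Matrix.vecHead, Matrix.vecTail] <;> (push_cast; ring)
  have h1 : ((uM (i+1) : (M2 ℚ)ˣ) • v).1 1 = 6 * v.1 0 + (1-12*(i+1:ℚ)) * v.1 1 := by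
    rw [V2_smul_val]
    show (mM (i+1)).mulVec v.1 1 = _
    simp [mM, Matrix.mulVec, dotProduct, Fin.sum_univ_two, Matrix.vecHead, Matrix.vecTail] <;> (push_cast; ring)
  constructor
  · rw [uu, h0, h1, uu]; ring
  · rw [h1, uu]; ring

lemma uMinv_smul (i : ℕ) (v : V2) :
    uu i (((uM (i+1) : (M2 ℚ)ˣ))⁻¹ • v) = uu i v ∧
    (((uM (i+1) : (M2 ℚ)ˣ))⁻¹ • v).1 1 = -6 * uu i v + v.1 1 := by
  have hval : ((uM (i+1) : (M2 ℚ)ˣ))⁻¹.val = !![1-12*(i+1:ℚ), 24*(i+1:ℚ)^2; -6, 1+12*(i+1:ℚ)] := by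
    show (uM (i+1) : (M2 ℚ)ˣ).inv = _
    simp only [uM]
    push_cast; ring_nf
  have h0 : (((uM (i+1) : (M2 ℚ)ˣ))⁻¹ • v).1 0
      = (1-12*(i+1:ℚ)) * v.1 0 + 24*(i+1:ℚ)^2 * v.1 1 := by
    rw [V2_smul_val, hval]
    simp [Matrix.mulVec, dotProduct, Fin.sum_univ_two, Matrix.vecHead, Matrix.vecTail] <;> ring
  have h1 : (((uM (i+1) : (M2 ℚ)ˣ))⁻¹ • v).1 1 = -6 * v.1 0 + (1+12*(i+1:ℚ)) * v.1 1 := by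
    rw [V2_smul_val, hval]
    simp [Matrix.mulVec, dotProduct, Fin.sum_univ_two, Matrix.vecHead, Matrix.vecTail] <;> ring
  constructor
  · rw [uu, h0, h1, uu]; ring
  · rw [h1, uu]; ring

lemma v2_ne (v : V2) (h0 : v.1 0 = 0) (h1 : v.1 1 = 0) : False := by
  apply v.2; funext j; fin_cases j <;> simpa

lemma disj_aux {i j : ℕ} (hij : i ≠ j) (v : V2)
    (h2 : 2 * |uu i v| < |v.1 1|) (h4 : 2 * |uu j v| < |v.1 1|) : False := by
  have hd : uu i v - uu j v = 2*((j:ℚ) - i) * v.1 1 := by simp [uu]; ring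
  have hge : (1:ℚ) ≤ |(j:ℚ) - i| := by
    have h' : ((j:ℤ) - (i:ℤ)) ≠ 0 := by
      intro h; apply hij; omega
    have h1 := Int.one_le_abs h'
    have h2' : ((1:ℤ):ℚ) ≤ ((|(j:ℤ) - (i:ℤ)| : ℤ) : ℚ) := by exact_mod_cast h1
    rw [Int.cast_abs] at h2'
    push_cast at h2'
    simpa using h2'
  have habs : |uu i v - uu j v| = 2 * |(j:ℚ) - i| * |v.1 1| := by
    rw [hd, abs_mul, abs_mul]; norm_num
  have htri : |uu i v - uu j v| ≤ |uu i v| + |uu j v| := abs_sub _ _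
  nlinarith [abs_nonneg (v.1 1)]

lemma stepX (u y : ℚ) (hne : ¬(u = 0 ∧ y = 0)) (hc : 0 ≤ u*y ∨ |y| ≤ 2*|u|) :
    0 ≤ u*(6*u+y) ∧ 2*|u| < |6*u+y| := by
  by_cases hu0 : u = 0
  · subst hu0
    have hy : y ≠ 0 := fun h => hne ⟨rfl, h⟩
    constructor
    · simp
    · simpa using abs_pos.mpr hy
  · have hupos : 0 < |u| := abs_pos.mpr hu0
    constructor
    · rcases hc with hc | hc <;>
        rcases abs_cases u with ⟨e1,e2⟩|⟨e1,e2⟩ <;> rcases abs_cases y with ⟨f1,f2⟩|⟨f1,f2⟩ <;>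
        nlinarith [sq_nonneg u, sq_nonneg y, hupos]
    · rcases hc with hc | hc <;>
        rcases abs_cases u with ⟨e1,e2⟩|⟨e1,e2⟩ <;> rcases abs_cases y with ⟨f1,f2⟩|⟨f1,f2⟩ <;>
        rcases abs_cases (6*u+y) with ⟨g1,g2⟩|⟨g1,g2⟩ <;>
        nlinarith [sq_nonneg u, sq_nonneg y, hupos]

lemma stepY (u y : ℚ) (hne : ¬(u = 0 ∧ y = 0)) (hc : u*y < 0 ∨ |y| ≤ 2*|u|) :
    u*(-6*u+y) < 0 ∧ 2*|u| < |-6*u+y| := by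
  by_cases hu0 : u = 0
  · exfalso
    subst hu0
    have hy : y ≠ 0 := fun h => hne ⟨rfl, h⟩
    rcases hc with hc | hc
    · simp at hc
    · simp at hc
      exact hy hc
  · have hupos : 0 < |u| := abs_pos.mpr hu0
    constructor
    · rcases hc with hc | hc <;>
        rcases abs_cases u with ⟨e1,e2⟩|⟨e1,e2⟩ <;> rcases abs_cases y with ⟨f1,f2⟩|⟨f1,f2⟩ <;>
        nlinarith [sq_nonneg u, sq_nonneg y, hupos]
    · rcases hc with hc | hc <;>
        rcases abs_cases u with ⟨e1,e2⟩|⟨e1,e2⟩ <;> rcases abs_cases y with ⟨f1,f2⟩|⟨f1,f2⟩ <;>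
        rcases abs_cases (-6*u+y) with ⟨g1,g2⟩|⟨g1,g2⟩ <;>
        nlinarith [sq_nonneg u, sq_nonneg y, hupos]

lemma uu_ne_zero (i : ℕ) (w : V2) : ¬(uu i w = 0 ∧ w.1 1 = 0) := by
  rintro ⟨h1, h2⟩
  refine v2_ne w ?_ h2
  have h : uu i w = w.1 0 - 2*((i:ℚ)+1) * w.1 1 := by simp [uu]
  rw [h1, h2] at h
  linarith

open Pointwise in
lemma freeFam : Function.Injective (FreeGroup.lift (fun i : ℕ => (uM (i+1) : (M2 ℚ)ˣ))) := by
  apply FreeGroup.injective_lift_of_ping_pong _ XX YY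
  · -- nonempty
    intro i
    refine ⟨⟨![2*(i+1), 1], by intro h; simpa using congrFun h 1⟩, ?_, ?_⟩ <;>
      simp [XX, uu]
  · intro i j hij
    rw [Function.onFun, Set.disjoint_left]
    rintro v ⟨-, h2⟩ ⟨-, h4⟩
    exact disj_aux hij v h2 h4
  · intro i j hij
    rw [Function.onFun, Set.disjoint_left]
    rintro v ⟨-, h2⟩ ⟨-, h4⟩
    exact disj_aux hij v h2 h4
  · intro i j
    rw [Set.disjoint_left]
    rintro v ⟨hx1, h2⟩ ⟨hy1, h4⟩
    rcases eq_or_ne i j with rfl | hij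
    · exact absurd hx1 (not_le.mpr hy1)
    · exact disj_aux hij v h2 h4
  · -- hX
    intro i v hv
    obtain ⟨w, hw, rfl⟩ := hv
    obtain ⟨h1, h2⟩ := uM_smul i w
    have hXmem : ((uM (i+1) : (M2 ℚ)ˣ) • w) ∈ XX i ↔
        (0 ≤ uu i w * (6 * uu i w + w.1 1) ∧ 2 * |uu i w| < |6 * uu i w + w.1 1|) := by
      rw [XX, Set.mem_setOf_eq, h1, h2]
    rw [hXmem]
    have hw' : ¬(uu i w * w.1 1 < 0 ∧ 2 * |uu i w| < |w.1 1|) := hw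
    rw [not_and_or, not_lt, not_lt] at hw'
    exact stepX _ _ (uu_ne_zero i w) hw'
  · -- hY
    intro i v hv
    obtain ⟨w, hw, rfl⟩ := hv
    obtain ⟨h1, h2⟩ := uMinv_smul i w
    have hYmem : (((uM (i+1) : (M2 ℚ)ˣ))⁻¹ • w) ∈ YY i ↔
        (uu i w * (-6 * uu i w + w.1 1) < 0 ∧ 2 * |uu i w| < |-6 * uu i w + w.1 1|) := by
      rw [YY, Set.mem_setOf_eq, h1, h2]
    show ((uM (i+1) : (M2 ℚ)ˣ))⁻¹ • w ∈ YY i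
    rw [hYmem]
    have hw' : ¬(0 ≤ uu i w * w.1 1 ∧ 2 * |uu i w| < |w.1 1|) := hw
    rw [not_and_or, not_le, not_lt] at hw'
    exact stepY _ _ (uu_ne_zero i w) hw'

/-! ### Layer 3: embeddings into `F₂` and full residual freeness -/

def uUt (r : R) : (M2 R)ˣ :=
  ⟨!![1, r; 0, 1], !![1, -r; 0, 1], by
    ext i j; fin_cases i <;> fin_cases j <;>
      simp [Matrix.mul_apply, Fin.sum_univ_two, Matrix.one_apply], by
    ext i j; fin_cases i <;> fin_cases j <;>
      simp [Matrix.mul_apply, Fin.sum_univ_two, Matrix.one_apply]⟩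

def uLt (r : R) : (M2 R)ˣ :=
  ⟨!![1, 0; r, 1], !![1, 0; -r, 1], by
    ext i j; fin_cases i <;> fin_cases j <;>
      simp [Matrix.mul_apply, Fin.sum_univ_two, Matrix.one_apply], by
    ext i j; fin_cases i <;> fin_cases j <;>
      simp [Matrix.mul_apply, Fin.sum_univ_two, Matrix.one_apply]⟩

lemma uUt_mul (r s : R) : uUt r * uUt s = uUt (r + s) := by
  ext : 1
  show (!![1, r; 0, 1] : M2 R) * !![1, s; 0, 1] = _
  ext i j; fin_cases i <;> fin_cases j <;> simp [uUt, uLt, Matrix.mul_apply, Fin.sum_univ_two] <;>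
    ring

lemma uLt_mul (r s : R) : uLt r * uLt s = uLt (r + s) := by
  ext : 1
  show (!![1, 0; r, 1] : M2 R) * !![1, 0; s, 1] = _
  ext i j; fin_cases i <;> fin_cases j <;> simp [uUt, uLt, Matrix.mul_apply, Fin.sum_univ_two] <;>
    ring

lemma uUt_pow (r : R) (k : ℕ) : (uUt r)^k = uUt (k * r) := by
  induction k with
  | zero =>
    ext : 1
    show (1 : M2 R) = !![1, (0:ℕ)*r; 0, 1]
    ext i j; fin_cases i <;> fin_cases j <;> simp [uUt, uLt, Matrix.one_apply]
  | succ k ih =>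
    rw [pow_succ, ih, uUt_mul]
    congr 1
    push_cast; ring

lemma uUt_inv (r : R) : (uUt r)⁻¹ = uUt (-r) := by
  rw [eq_comm, eq_inv_iff_mul_eq_one, uUt_mul]
  ext : 1
  show (!![1, -r + r; 0, 1] : M2 R) = 1
  ext i j; fin_cases i <;> fin_cases j <;> simp [uUt, uLt, Matrix.one_apply]

lemma uLt_pow (r : R) (k : ℕ) : (uLt r)^k = uLt (k * r) := by
  induction k with
  | zero =>
    ext : 1
    show (1 : M2 R) = !![1, 0; (0:ℕ)*r, 1]
    ext i j; fin_cases i <;> fin_cases j <;> simp [uUt, uLt, Matrix.one_apply]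
  | succ k ih =>
    rw [pow_succ, ih, uLt_mul]
    congr 1
    push_cast; ring

/-- conjugation identity : `U(2c) L(6) U(-2c) = M c`. -/
lemma uUL_conj (c : ℕ) :
    (uUt (2*((c:ℚ)+1)) * uLt 6) * uUt (-(2*((c:ℚ)+1))) = uM (c+1) := by
  ext : 1
  show (!![1, 2*((c:ℚ)+1); 0, 1] * !![1, 0; 6, 1]) * !![1, -(2*((c:ℚ)+1)); 0, 1] = mM (c+1)
  ext i j
  fin_cases i <;> fin_cases j <;> simp [uUt, uLt, Matrix.mul_apply, Fin.sum_univ_two, mM] <;>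
    push_cast <;> ring

/-- the hom `F₂ → GL₂(ℚ)` sending the generators to the Sanov-type generators. -/
def rho2 : FreeGroup (Fin 2) →* (M2 ℚ)ˣ :=
  FreeGroup.lift (fun j => if j = 0 then uUt 2 else uLt 2)

/-- the word `a^(i+1) b³ a^(-(i+1))` in `F₂`. -/
def wrd (i : ℕ) : FreeGroup (Fin 2) :=
  (FreeGroup.of 0)^(i+1) * (FreeGroup.of 1)^3 * ((FreeGroup.of 0)^(i+1))⁻¹

lemma rho2_wrd (i : ℕ) : rho2 (wrd i) = uM (i+1) := by
  have h0 : rho2 (FreeGroup.of 0) = uUt 2 := by simp [rho2]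
  have h1 : rho2 (FreeGroup.of 1) = uLt 2 := by simp [rho2]
  rw [wrd, _root_.map_mul, _root_.map_mul, _root_.map_inv, _root_.map_pow, _root_.map_pow, h0, h1, uUt_pow, uLt_pow, uUt_inv]
  have e1 : ((i+1 : ℕ) : ℚ) * 2 = 2*((i:ℚ)+1) := by push_cast; ring
  have e2 : ((3:ℕ):ℚ) * 2 = 6 := by norm_num
  rw [e1, e2, uUL_conj]

/-- lift over `Fin m` of the `uM` family, still injective. -/
def rhoFin (m : ℕ) : FreeGroup (Fin m) →* (M2 ℚ)ˣ :=
  FreeGroup.lift (fun i => uM ((i : ℕ)+1))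

lemma rhoFin_inj (m : ℕ) (hm : 0 < m) : Function.Injective (rhoFin m) := by
  have hcomp : (rhoFin m) =
      (FreeGroup.lift (fun i : ℕ => (uM (i+1) : (M2 ℚ)ˣ))).comp (FreeGroup.map (Fin.val)) := by
    apply FreeGroup.ext_hom
    intro a
    simp [rhoFin, FreeGroup.map.of]
  rw [hcomp]
  apply Function.Injective.comp freeFam
  -- injectivity of `FreeGroup.map val`
  have : Function.LeftInverse
      (FreeGroup.map (fun k : ℕ => if h : k < m then (⟨k, h⟩ : Fin m) else ⟨0, hm⟩))
      (FreeGroup.map (Fin.val : Fin m → ℕ)) := by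
    intro x
    have : (FreeGroup.map (fun k : ℕ => if h : k < m then (⟨k, h⟩ : Fin m) else ⟨0, hm⟩)).comp
        (FreeGroup.map (Fin.val : Fin m → ℕ)) = MonoidHom.id _ := by
      apply FreeGroup.ext_hom
      intro a
      simp [FreeGroup.map.of]
    show (FreeGroup.map (fun k : ℕ => if h : k < m then (⟨k, h⟩ : Fin m) else ⟨0, hm⟩))
        ((FreeGroup.map (Fin.val : Fin m → ℕ)) x) = x
    rw [← MonoidHom.comp_apply, this, MonoidHom.id_apply]
  exact this.injective

/-- the embedding `F_m ↪ F₂`. -/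
def emb (m : ℕ) : FreeGroup (Fin m) →* FreeGroup (Fin 2) :=
  FreeGroup.lift (fun i => wrd (i : ℕ))

lemma emb_inj (m : ℕ) (hm : 0 < m) : Function.Injective (emb m) := by
  have hcomp : rho2.comp (emb m) = rhoFin m := by
    apply FreeGroup.ext_hom
    intro a
    simp [emb, rhoFin, rho2_wrd]
  intro x y hxy
  apply rhoFin_inj m hm
  rw [← hcomp]
  simp [MonoidHom.comp_apply, hxy]

lemma frf_of_injective {G H : Type*} [Group G] [Group H] (f : G →* H) (hf : Function.Injective f)
    (hH : FullyResiduallyFree H) : FullyResiduallyFree G := by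
  classical
  intro S
  obtain ⟨φ, hφ⟩ := hH (S.image f)
  refine ⟨φ.comp f, fun s hs hs1 => hφ (f s) (Finset.mem_image_of_mem f hs) ?_⟩
  intro h
  exact hs1 (hf (by rw [h, _root_.map_one]))

lemma frf_F2 : FullyResiduallyFree (FreeGroup (Fin 2)) :=
  fun _ => ⟨MonoidHom.id _, fun _ _ h1 => h1⟩

lemma frf_Fn (m : ℕ) (hm : 0 < m) : FullyResiduallyFree (FreeGroup (Fin m)) :=
  frf_of_injective (emb m) (emb_inj m hm) frf_F2

/-! ### Layer 4: the key approximation lemma -/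

noncomputable def evGL (q : ℚ) : (M2 (Polynomial ℚ))ˣ →* (M2 ℚ)ˣ :=
  matGL (Polynomial.evalRingHom q)

/-- the generic marking hom on `F_{n+1}` sending the first `n` generators to the
fixed free family and the last generator to `g`. -/
def Phi (R : Type) [CommRing R] (n : ℕ) (g : (M2 R)ˣ) : FreeGroup (Fin (n+1)) →* (M2 R)ˣ :=
  FreeGroup.lift (fun i => if (i : ℕ) < n then uM ((i:ℕ)+1) else g)

lemma Phi_comp (f : R →+* S) (n : ℕ) (g : (M2 R)ˣ) :
    (matGL f).comp (Phi R n g) = Phi S n (matGL f g) := by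
  apply FreeGroup.ext_hom
  intro i
  simp only [Phi, MonoidHom.comp_apply, FreeGroup.lift_apply_of]
  split
  · exact matGL_uM f _
  · rfl

lemma Phi_base_inj (n : ℕ) : Function.Injective (Phi ℚ n (uM ((n:ℤ)+1))) := by
  have h : Phi ℚ n (uM ((n:ℤ)+1)) = rhoFin (n+1) := by
    apply FreeGroup.ext_hom
    intro i
    simp only [Phi, rhoFin, FreeGroup.lift_apply_of]
    split
    · rfl
    · next hlt =>
      have hn : (i : ℕ) = n := by omega
      rw [hn]
  rw [h]
  exact rhoFin_inj (n+1) (Nat.succ_pos n)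

def dmat (A : M2 R) : R :=
  (A 0 0 - 1)^2 + (A 0 1)^2 + (A 1 0)^2 + (A 1 1 - 1)^2

lemma dmat_eq_zero_iff (A : M2 ℚ) : dmat A = 0 ↔ A = 1 := by
  rw [dmat]
  constructor
  · intro h
    have s0 := sq_nonneg (A 0 0 - 1)
    have s1 := sq_nonneg (A 0 1)
    have s2 := sq_nonneg (A 1 0)
    have s3 := sq_nonneg (A 1 1 - 1)
    have e0 : (A 0 0 - 1)^2 = 0 := le_antisymm (by linarith) s0
    have e1 : (A 0 1)^2 = 0 := le_antisymm (by linarith) s1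
    have e2 : (A 1 0)^2 = 0 := le_antisymm (by linarith) s2
    have e3 : (A 1 1 - 1)^2 = 0 := le_antisymm (by linarith) s3
    have f0 : A 0 0 = 1 := by have := pow_eq_zero_iff (n := 2) (by norm_num) |>.mp e0; linarith
    have f1 : A 0 1 = 0 := by have := pow_eq_zero_iff (n := 2) (by norm_num) |>.mp e1; linarith
    have f2 : A 1 0 = 0 := by have := pow_eq_zero_iff (n := 2) (by norm_num) |>.mp e2; linarith
    have f3 : A 1 1 = 1 := by have := pow_eq_zero_iff (n := 2) (by norm_num) |>.mp e3; linarith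
    ext i j
    fin_cases i <;> fin_cases j <;> simp [Matrix.one_apply, f0, f1, f2, f3]
  · intro h
    subst h
    norm_num [Matrix.one_apply]

lemma dmat_map (f : R →+* S) (A : M2 R) : dmat (f.mapMatrix A) = f (dmat A) := by
  simp only [dmat, RingHom.mapMatrix_apply, Matrix.map_apply, map_add, map_pow, map_sub,
    _root_.map_one]

open Polynomial in
lemma spec_step (n : ℕ) (T : Finset (FreeGroup (Fin (n+1)))) (G : (M2 (Polynomial ℚ))ˣ) (q₀ : ℚ)
    (h₀ : ∀ t ∈ T, t ≠ 1 → Phi ℚ n (evGL q₀ G) t ≠ 1) :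
    ∃ m : ℤ, ∀ t ∈ T, t ≠ 1 → Phi ℚ n (evGL ((6*m : ℤ) : ℚ) G) t ≠ 1 := by
  classical
  set p : FreeGroup (Fin (n+1)) → Polynomial ℚ :=
    fun t => dmat ((Phi (Polynomial ℚ) n G t).val) with hp
  have key : ∀ (q : ℚ) (t : FreeGroup (Fin (n+1))),
      (Phi ℚ n (evGL q G) t ≠ 1 ↔ (p t).eval q ≠ 0) := by
    intro q t
    have h1 : Phi ℚ n (evGL q G) t = evGL q (Phi (Polynomial ℚ) n G t) := by
      rw [evGL, ← Phi_comp]; rfl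
    have h2 : (p t).eval q = dmat ((evGL q (Phi (Polynomial ℚ) n G t)).val) := by
      rw [hp]
      have hval : ((evGL q (Phi (Polynomial ℚ) n G t)).val)
          = (evalRingHom q).mapMatrix ((Phi (Polynomial ℚ) n G t).val) := rfl
      rw [hval, dmat_map]
      rfl
    rw [h1, Ne, Units.ext_iff, Units.val_one, ← dmat_eq_zero_iff, Ne, h2]
  set T' := T.filter (fun t => t ≠ 1) with hT'
  have hroots : ∀ t ∈ T', {q : ℚ | (p t).IsRoot q}.Finite := by
    intro t ht
    apply Polynomial.finite_setOf_isRoot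
    intro h0'
    refine (key q₀ t).mp (h₀ t (Finset.mem_filter.mp ht).1 (Finset.mem_filter.mp ht).2) ?_
    rw [h0', Polynomial.eval_zero]
  have hbad : (⋃ t ∈ T', {q : ℚ | (p t).IsRoot q}).Finite :=
    Set.Finite.biUnion T'.finite_toSet hroots
  have hinf : (Set.range (fun m : ℕ => 6*(m:ℚ))).Infinite := by
    apply Set.infinite_range_of_injective
    intro a b hab
    have hab' : (6:ℚ)*a = 6*b := hab
    have : (a:ℚ) = b := by linarith
    exact_mod_cast this
  obtain ⟨q, hq1, hq2⟩ := hinf.exists_notMem_finite hbad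
  obtain ⟨m, rfl⟩ := hq1
  refine ⟨(m:ℤ), ?_⟩
  intro t ht ht1
  have hcast : ((6*(m:ℤ) : ℤ) : ℚ) = 6*(m:ℚ) := by push_cast; ring
  rw [hcast, key]
  intro hev
  apply hq2
  exact Set.mem_biUnion (Finset.mem_filter.mpr ⟨ht, ht1⟩) hev

open Polynomial in
lemma keyLemma (n : ℕ) (hn : 2 ≤ n) (T : Finset (FreeGroup (Fin (n+1)))) :
    ∃ φ : FreeGroup (Fin (n+1)) →* FreeGroup (Fin n),
      Function.Surjective φ ∧ (∃ z, z ≠ 1 ∧ φ z = 1) ∧ ∀ t ∈ T, t ≠ 1 → φ t ≠ 1 := by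
  classical
  have ht0 : (2:ℚ)*((n:ℤ)+1 : ℤ) - 2 ≠ 0 := by
    push_cast
    intro h
    have : (n:ℚ) = 0 := by linarith
    have : n = 0 := by exact_mod_cast this
    omega
  set a₀ : ℚ := 1/((2:ℚ)*((n:ℤ)+1:ℤ)-2) - 1/2 with ha₀
  set b₀ : ℚ := 3/2*((2:ℚ)*((n:ℤ)+1:ℤ)-2)^2 with hb₀
  set d₀ : ℚ := 1/2 - 1/((2:ℚ)*((n:ℤ)+1:ℤ)-2) with hd₀
  have hbase : ∀ t ∈ T, t ≠ 1 → Phi ℚ n (uP a₀ * uQ b₀ * uP d₀) t ≠ 1 := by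
    intro t htT ht1
    rw [ha₀, hb₀, hd₀, solve ((n:ℤ)+1) ht0]
    intro h
    exact ht1 (Phi_base_inj n (by rw [h, _root_.map_one]))
  -- step 1 : specialize the last `uP`-slot to an integer
  have hev₁ : ∀ q : ℚ, evGL q (uP (C a₀) * uQ (C b₀) * uP X) = uP a₀ * uQ b₀ * uP q := by
    intro q
    rw [_root_.map_mul, _root_.map_mul, evGL, matGL_uP, matGL_uQ, matGL_uP]
    simp [coe_evalRingHom]
  obtain ⟨m₃, hm₃⟩ := spec_step n T (uP (C a₀) * uQ (C b₀) * uP X) d₀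
    (by intro t h1 h2; rw [hev₁]; exact hbase t h1 h2)
  rw [hev₁] at hm₃
  -- step 2
  have hev₂ : ∀ q : ℚ,
      evGL q (uP (C a₀) * uQ X * uP (C ((6*m₃ : ℤ):ℚ))) = uP a₀ * uQ q * uP ((6*m₃ : ℤ):ℚ) := by
    intro q
    rw [_root_.map_mul, _root_.map_mul, evGL, matGL_uP, matGL_uQ, matGL_uP]
    simp [coe_evalRingHom]
  obtain ⟨m₂, hm₂⟩ := spec_step n T (uP (C a₀) * uQ X * uP (C ((6*m₃ : ℤ):ℚ))) b₀
    (by intro t h1 h2; rw [hev₂]; exact hm₃ t h1 h2)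
  rw [hev₂] at hm₂
  -- step 3
  have hev₃ : ∀ q : ℚ,
      evGL q (uP X * uQ (C ((6*m₂ : ℤ):ℚ)) * uP (C ((6*m₃ : ℤ):ℚ)))
        = uP q * uQ ((6*m₂ : ℤ):ℚ) * uP ((6*m₃ : ℤ):ℚ) := by
    intro q
    rw [_root_.map_mul, _root_.map_mul, evGL, matGL_uP, matGL_uQ, matGL_uP]
    simp [coe_evalRingHom]
  obtain ⟨m₁, hm₁⟩ := spec_step n T (uP X * uQ (C ((6*m₂ : ℤ):ℚ)) * uP (C ((6*m₃ : ℤ):ℚ))) a₀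
    (by intro t h1 h2; rw [hev₃]; exact hm₂ t h1 h2)
  rw [hev₃] at hm₁
  -- now build the word and the homomorphism
  have h0n : 0 < n := by omega
  have h1n : 1 < n := by omega
  set i0 : Fin n := ⟨0, h0n⟩ with hi0
  set i1 : Fin n := ⟨1, h1n⟩ with hi1
  set wt : FreeGroup (Fin n) :=
    (FreeGroup.of i0)^(m₁ : ℤ) * (FreeGroup.of i1)^(m₂ : ℤ) * (FreeGroup.of i0)^(m₃ : ℤ) with hwt
  have hof0 : rhoFin n (FreeGroup.of i0) = uP 6 := by
    rw [rhoFin, FreeGroup.lift_apply_of, hi0]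
    have : ((⟨0, h0n⟩ : Fin n) : ℕ) = 0 := rfl
    rw [this]
    norm_num [uM_one]
  have hof1 : rhoFin n (FreeGroup.of i1) = uQ 6 := by
    rw [rhoFin, FreeGroup.lift_apply_of, hi1]
    have : ((⟨1, h1n⟩ : Fin n) : ℕ) = 1 := rfl
    rw [this]
    norm_num [uM_two]
  have hρw : rhoFin n wt = uP ((6*m₁:ℤ):ℚ) * uQ ((6*m₂:ℤ):ℚ) * uP ((6*m₃:ℤ):ℚ) := by
    rw [hwt, _root_.map_mul, _root_.map_mul, _root_.map_zpow, _root_.map_zpow, _root_.map_zpow,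
      hof0, hof1, uP_zpow, uQ_zpow, uP_zpow]
    rw [show ((m₁:ℚ) * 6) = ((6*m₁:ℤ):ℚ) by push_cast; ring,
      show ((m₂:ℚ) * 6) = ((6*m₂:ℤ):ℚ) by push_cast; ring,
      show ((m₃:ℚ) * 6) = ((6*m₃:ℤ):ℚ) by push_cast; ring]
  set φ : FreeGroup (Fin (n+1)) →* FreeGroup (Fin n) :=
    FreeGroup.lift (fun i => if h : (i:ℕ) < n then FreeGroup.of (⟨i, h⟩ : Fin n) else wt) with hφ
  have hφof : ∀ i : Fin (n+1),
      φ (FreeGroup.of i) = if h : (i:ℕ) < n then FreeGroup.of (⟨i, h⟩ : Fin n) else wt := by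
    intro i
    rw [hφ, FreeGroup.lift_apply_of]
  have hcompφ : (rhoFin n).comp φ
      = Phi ℚ n (uP ((6*m₁:ℤ):ℚ) * uQ ((6*m₂:ℤ):ℚ) * uP ((6*m₃:ℤ):ℚ)) := by
    apply FreeGroup.ext_hom
    intro i
    rw [MonoidHom.comp_apply, hφof, Phi, FreeGroup.lift_apply_of]
    by_cases h : (i:ℕ) < n
    · rw [dif_pos h, if_pos h, rhoFin, FreeGroup.lift_apply_of]
    · rw [dif_neg h, if_neg h, hρw]
  refine ⟨φ, ?_, ?_, ?_⟩
  · -- surjective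
    intro x
    induction x using FreeGroup.induction_on with
    | C1 => exact ⟨1, _root_.map_one φ⟩
    | of j =>
      refine ⟨FreeGroup.of (Fin.castSucc j), ?_⟩
      rw [hφof, dif_pos (show ((Fin.castSucc j : Fin (n+1)) : ℕ) < n by simpa using j.isLt)]
      exact congrArg FreeGroup.of (Fin.ext (by simp))
    | inv_of j ih =>
      obtain ⟨y, hy⟩ := ih
      exact ⟨y⁻¹, by rw [_root_.map_inv, hy]⟩
    | mul x y ihx ihy =>
      obtain ⟨a, ha⟩ := ihx
      obtain ⟨b, hb⟩ := ihy
      exact ⟨a*b, by rw [_root_.map_mul, ha, hb]⟩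
  · -- nontrivial kernel element
    set ι : FreeGroup (Fin n) →* FreeGroup (Fin (n+1)) :=
      FreeGroup.map (Fin.castSucc : Fin n → Fin (n+1)) with hι
    have hφι : ∀ x, φ (ι x) = x := by
      intro x
      have hcomp : φ.comp ι = MonoidHom.id _ := by
        apply FreeGroup.ext_hom
        intro j
        rw [MonoidHom.comp_apply, hι, FreeGroup.map.of, MonoidHom.id_apply, hφof,
          dif_pos (show ((Fin.castSucc j : Fin (n+1)) : ℕ) < n by simpa using j.isLt)]
        exact congrArg FreeGroup.of (Fin.ext (by simp))
      rw [← MonoidHom.comp_apply, hcomp, MonoidHom.id_apply]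
    refine ⟨FreeGroup.of (Fin.last n) * (ι wt)⁻¹, ?_, ?_⟩
    · set σ : FreeGroup (Fin (n+1)) →* Multiplicative ℤ :=
        FreeGroup.lift (fun i => Multiplicative.ofAdd (if (i:ℕ) = n then (1:ℤ) else 0)) with hσ
      intro h1
      have hσι : ∀ x, σ (ι x) = 1 := by
        intro x
        have hcomp : σ.comp ι = 1 := by
          apply FreeGroup.ext_hom
          intro j
          rw [MonoidHom.comp_apply, hι, FreeGroup.map.of, hσ, FreeGroup.lift_apply_of]
          have : ((Fin.castSucc j : Fin (n+1)) : ℕ) ≠ n := by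
            have := j.isLt; simp only [Fin.coe_castSucc]; omega
          rw [if_neg this, MonoidHom.one_apply]
          rfl
        rw [← MonoidHom.comp_apply, hcomp, MonoidHom.one_apply]
      have h2 := congrArg σ h1
      rw [_root_.map_mul, _root_.map_inv, _root_.map_one, hσι, inv_one, mul_one, hσ,
        FreeGroup.lift_apply_of, if_pos (show ((Fin.last n : Fin (n+1)) : ℕ) = n from rfl)] at h2
      exact one_ne_zero (Multiplicative.ofAdd.injective (h2.trans (ofAdd_zero).symm))
    · rw [_root_.map_mul, _root_.map_inv, hφι, hφof,
        dif_neg (show ¬ ((Fin.last n : Fin (n+1)) : ℕ) < n by simp [Fin.last])]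
      exact mul_inv_cancel wt
  · -- survives on T
    intro t htT ht1 h
    refine hm₁ t htT ht1 ?_
    have : Phi ℚ n (uP ((6*m₁:ℤ):ℚ) * uQ ((6*m₂:ℤ):ℚ) * uP ((6*m₃:ℤ):ℚ)) t
        = rhoFin n (φ t) := by rw [← hcompφ]; rfl
    rw [this, h, _root_.map_one]

/-! ### Layer 5: topology of the space of marked groups -/

lemma chi_comap {G H : Type*} [Group G] [Group H] (ψ : G →* H) (N : Subgroup H) :
    chi ((N.comap ψ : Subgroup G) : Set G) = chi (N : Set H) ∘ ψ := by
  funext g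
  unfold chi
  simp only [Function.comp_apply]
  exact decide_eq_decide.mpr Iff.rfl

lemma frf_quot_comap {n : ℕ} (ψ : FreeGroup (Fin (n+1)) →* FreeGroup (Fin n))
    (N : Subgroup (FreeGroup (Fin n))) [hN : N.Normal]
    (hfrf : FullyResiduallyFree (FreeGroup (Fin n) ⧸ N)) :
    FullyResiduallyFree (FreeGroup (Fin (n+1)) ⧸ N.comap ψ) := by
  haveI : (N.comap ψ).Normal := hN.comap ψ
  set κ : FreeGroup (Fin (n+1)) ⧸ N.comap ψ →* FreeGroup (Fin n) ⧸ N :=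
    QuotientGroup.map (N.comap ψ) N ψ le_rfl with hκ
  have hκinj : Function.Injective κ := by
    rw [injective_iff_map_eq_one]
    intro x hx
    induction x using QuotientGroup.induction_on with
    | H g =>
      rw [hκ, QuotientGroup.map_mk, QuotientGroup.eq_one_iff] at hx
      rw [QuotientGroup.eq_one_iff]
      exact hx
  exact frf_of_injective κ hκinj hfrf

lemma LnSet_comap {n : ℕ} (ψ : FreeGroup (Fin (n+1)) →* FreeGroup (Fin n)) :
    (fun f => f ∘ ψ) '' LnSet n ⊆ LnSet (n+1) := by
  rintro _ ⟨f, ⟨N, hN, hfrf, rfl⟩, rfl⟩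
  haveI := hN
  exact ⟨N.comap ψ, hN.comap ψ, frf_quot_comap ψ N hfrf, (chi_comap ψ N).symm⟩

lemma comp_continuous {n : ℕ} (ψ : FreeGroup (Fin (n+1)) →* FreeGroup (Fin n)) :
    Continuous (fun f : FreeGroup (Fin n) → Bool => f ∘ ψ) :=
  continuous_pi fun g => continuous_apply (ψ g)

lemma comp_injective {n : ℕ} (ψ : FreeGroup (Fin (n+1)) →* FreeGroup (Fin n))
    (hψ : Function.Surjective ψ) :
    Function.Injective (fun f : FreeGroup (Fin n) → Bool => f ∘ ψ) := by
  intro f f' h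
  funext x
  obtain ⟨g, rfl⟩ := hψ x
  exact congrFun h g

lemma cbD_subset {X : Type*} [TopologicalSpace X] (A : Set X) : cbD A ⊆ A :=
  Set.inter_subset_left

lemma cbD_mono {X : Type*} [TopologicalSpace X] {A B : Set X} (h : A ⊆ B) : cbD A ⊆ cbD B :=
  Set.inter_subset_inter h (derivedSet_mono _ _ h)

lemma push_cbD {n : ℕ} (ψ : FreeGroup (Fin (n+1)) →* FreeGroup (Fin n))
    (hψ : Function.Surjective ψ) (k : ℕ) :
    (fun f => f ∘ ψ) '' (cbD^[k] (LnSet n)) ⊆ cbD^[k] (LnSet (n+1)) := by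
  induction k with
  | zero => exact LnSet_comap ψ
  | succ k ih =>
    rw [Function.iterate_succ_apply', Function.iterate_succ_apply']
    rintro _ ⟨f, hf, rfl⟩
    obtain ⟨hf1, hf2⟩ := hf
    constructor
    · exact ih ⟨f, hf1, rfl⟩
    · have hmem : (fun f : FreeGroup (Fin n) → Bool => f ∘ ψ) f ∈
          derivedSet ((fun f : FreeGroup (Fin n) → Bool => f ∘ ψ) '' (cbD^[k] (LnSet n))) :=
        (comp_continuous ψ).image_derivedSet (comp_injective ψ hψ) ⟨f, hf2, rfl⟩
      exact derivedSet_mono _ _ ih hmem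

lemma bot_mem_LnSet (n : ℕ) (hn : 0 < n) :
    chi ((⊥ : Subgroup (FreeGroup (Fin n))) : Set (FreeGroup (Fin n))) ∈ LnSet n := by
  refine ⟨⊥, inferInstance, ?_, rfl⟩
  exact frf_of_injective (QuotientGroup.quotientBot : _ ≃* FreeGroup (Fin n)).toMonoidHom
    (MulEquiv.injective _) (frf_Fn n hn)

lemma main_mem (n : ℕ) (hn : 2 ≤ n) : ∀ j, j ≤ n - 2 →
    chi ((⊥ : Subgroup (FreeGroup (Fin n))) : Set (FreeGroup (Fin n))) ∈ cbD^[j] (LnSet n) := by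
  induction n, hn using Nat.le_induction with
  | base =>
    intro j hj
    have hj0 : j = 0 := by omega
    subst hj0
    simpa using bot_mem_LnSet 2 (by norm_num)
  | succ n hn ih =>
    intro j
    induction j with
    | zero =>
      intro _
      simpa using bot_mem_LnSet (n+1) (by omega)
    | succ j ihj =>
      intro hj
      have hj' : j ≤ n - 2 := by omega
      rw [Function.iterate_succ_apply']
      constructor
      · exact ihj (by omega)
      · set x := chi ((⊥ : Subgroup (FreeGroup (Fin (n+1)))) : Set (FreeGroup (Fin (n+1)))) with hx
        rw [mem_derivedSet, accPt_iff_nhds]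
        intro U hU
        obtain ⟨O, hOU, hOopen, hxO⟩ := mem_nhds_iff.mp hU
        obtain ⟨I, u, hIu, hpi⟩ := isOpen_pi_iff.mp hOopen x hxO
        obtain ⟨φ, hφs, ⟨z, hz1, hzφ⟩, hφT⟩ := keyLemma n hn I
        set y := (fun f : FreeGroup (Fin n) → Bool => f ∘ φ)
          (chi ((⊥ : Subgroup (FreeGroup (Fin n))) : Set (FreeGroup (Fin n)))) with hy
        have hagree : ∀ a : FreeGroup (Fin (n+1)), (a ≠ 1 → φ a ≠ 1) → y a = x a := by
          intro a ha
          rw [hy, hx]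
          show chi _ (φ a) = chi _ a
          unfold chi
          apply decide_eq_decide.mpr
          simp only [SetLike.mem_coe, Subgroup.mem_bot]
          constructor
          · intro h
            by_contra hne
            exact ha hne h
          · intro h
            rw [h, _root_.map_one]
        refine ⟨y, ⟨?_, ?_⟩, ?_⟩
        · apply hOU
          apply hpi
          rw [Set.mem_pi]
          intro a haI
          have hxa := (hIu a haI).2
          rwa [← hagree a (hφT a haI)] at hxa
        · exact push_cbD φ hφs j ⟨_, ih j hj', rfl⟩
        · intro h
          have h1 : y z = true := by
            rw [hy]
            show chi _ (φ z) = true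
            unfold chi
            exact @decide_eq_true _ (Classical.propDecidable _)
              (show φ z ∈ ((⊥ : Subgroup (FreeGroup (Fin n))) : Set _) by
                rw [hzφ]; exact Subgroup.one_mem _)
          have h2 : x z = false := by
            rw [hx]
            unfold chi
            exact @decide_eq_false _ (Classical.propDecidable _) (by
              simp only [SetLike.mem_coe, Subgroup.mem_bot]
              exact hz1)
          rw [h, h2] at h1
          exact Bool.false_ne_true h1


/-- For `n ≥ 2`, the trivial normal subgroup `{1}` of `F_n` (the kernel of the
identity marking of `F_n`) belongs to `L_n` and lies in `D^{n-2}(L_n)`, i.e. its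
Cantor–Bendixson rank in `L_n` is at least `n - 2`; equivalently `Rk(F_n) ≥ n - 1`. -/
theorem trivial_subgroup_CB_rank_ge (n : ℕ) (hn : 2 ≤ n) :
    chi ((⊥ : Subgroup (FreeGroup (Fin n))) : Set (FreeGroup (Fin n))) ∈ LnSet n ∧
      chi ((⊥ : Subgroup (FreeGroup (Fin n))) : Set (FreeGroup (Fin n))) ∈
        cbD^[n - 2] (LnSet n) := by
  exact ⟨bot_mem_LnSet n (by omega), main_mem n hn (n-2) le_rfl⟩
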